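/- Let (Ω, F, P) be a probability space and for each n = 1,...,N let A^(n) : Ω → ℝ^{I_n × R} be a random matrix with rows a^(n)_{i_n} : Ω → ℝ^R, where the collection of all row vectors is mutually independent and every entry is square-integrable. Let Y be a deterministic N-th order tensor of size I_1 × ··· × I_N and let O be a deterministic tensor of the same size with entries in {0,1}. Then E[‖O ⊛ (Y − [[A^(1),...,A^(N)]])‖_F²] = Σ_{i_1,...,i_N} O_{i_1...i_N} Y_{i_1...i_N}² − 2 Σ_{i_1,...,i_N} O_{i_1...i_N} Y_{i_1...i_N} ⟨E[a^(1)_{i_1}], ..., E[a^(N)_{i_N}]⟩ + Σ_{i_1,...,i_N} O_{i_1...i_N} ⟨E[a^(1)_{i_1} a^(1)T_{i_1}], ..., E[a^(N)_{i_N} a^(N)T_{i_N}]⟩, where the middle term uses the generalized inner product of vectors and the last term the generalized inner product of R × R matrices. -/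

import Mathlib

open scoped BigOperators Matrix
open Finset Matrix MeasureTheory ProbabilityTheory

/-- A subfamily (along an injective map) of an independent family is independent. -/
lemma iIndepFun_comp_right_of_injective {Ω ι κ β : Type*} [MeasurableSpace Ω]
    {μ : MeasureTheory.Measure Ω} [MeasurableSpace β] {f : ι → Ω → β}
    (h : ProbabilityTheory.iIndepFun f μ)
    {g : κ → ι} (hg : Function.Injective g) :
    ProbabilityTheory.iIndepFun (fun k => f (g k)) μ := by
  classical
  rw [ProbabilityTheory.iIndepFun_iff_measure_inter_preimage_eq_mul] at h ⊢
  intro S sets hsets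
  set sets' : ι → Set β := fun i =>
    if hh : ∃ k, g k = i then sets hh.choose else Set.univ with hsets'def
  have hkey : ∀ k, sets' (g k) = sets k := by
    intro k
    have hh : ∃ k', g k' = g k := ⟨k, rfl⟩
    have : hh.choose = k := hg hh.choose_spec
    simp [hsets'def, dif_pos hh, this]
  have h1 : (⋂ k ∈ S, f (g k) ⁻¹' sets k) = ⋂ i ∈ S.image g, f i ⁻¹' sets' i := by
    ext ω
    simp only [Set.mem_iInter, Finset.mem_image]
    constructor
    · rintro hs i ⟨k, hk, rfl⟩; rw [hkey]; exact hs k hk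
    · intro hs k hk; rw [← hkey]; exact hs (g k) ⟨k, hk, rfl⟩
  have h2 : (∏ k ∈ S, μ (f (g k) ⁻¹' sets k)) = ∏ i ∈ S.image g, μ (f i ⁻¹' sets' i) := by
    rw [Finset.prod_image (fun a _ b _ hab => hg hab)]
    exact Finset.prod_congr rfl fun k _ => by rw [hkey]
  rw [h1, h2]
  refine h (S.image g) ?_
  intro i hi
  obtain ⟨k, hk, rfl⟩ := Finset.mem_image.mp hi
  rw [hkey]
  exact hsets k hk

/-- Expectation of a product of independent integrable random variables. -/
lemma integral_finset_prod_of_iIndepFun {Ω ι : Type*} [MeasurableSpace Ω]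
    {μ : MeasureTheory.Measure Ω} [MeasureTheory.IsProbabilityMeasure μ]
    (s : Finset ι) (g : ι → Ω → ℝ)
    (h : ProbabilityTheory.iIndepFun g μ)
    (hmeas : ∀ i, Measurable (g i)) (hint : ∀ i, MeasureTheory.Integrable (g i) μ) :
    MeasureTheory.Integrable (fun ω => ∏ i ∈ s, g i ω) μ ∧
      ∫ ω, ∏ i ∈ s, g i ω ∂μ = ∏ i ∈ s, ∫ ω, g i ω ∂μ := by
  classical
  induction s using Finset.cons_induction with
  | empty => simp
  | cons a s ha ih =>
    have hind : ProbabilityTheory.IndepFun (fun ω => ∏ i ∈ s, g i ω) (g a) μ := by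
      have h0 := h.indepFun_finsetProd_of_notMem hmeas ha
      have heq : (∏ j ∈ s, g j) = fun ω => ∏ i ∈ s, g i ω := by
        funext ω; simp
      rwa [heq] at h0
    have hintp : MeasureTheory.Integrable
        (fun ω => (∏ i ∈ s, g i ω) * g a ω) μ := by
      have := hind.integrable_mul ih.1 (hint a)
      exact this
    constructor
    · have : (fun ω => ∏ i ∈ Finset.cons a s ha, g i ω)
          = fun ω => (∏ i ∈ s, g i ω) * g a ω := by
        funext ω; rw [Finset.prod_cons, mul_comm]
      rw [this]; exact hintp
    · have heq : (fun ω => ∏ i ∈ Finset.cons a s ha, g i ω)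
          = fun ω => (∏ i ∈ s, g i ω) * g a ω := by
        funext ω; rw [Finset.prod_cons, mul_comm]
      calc ∫ ω, ∏ i ∈ Finset.cons a s ha, g i ω ∂μ
          = ∫ ω, (∏ i ∈ s, g i ω) * g a ω ∂μ := by rw [heq]
        _ = (∫ ω, ∏ i ∈ s, g i ω ∂μ) * ∫ ω, g a ω ∂μ :=
            hind.integral_fun_mul_eq_mul_integral ih.1.aestronglyMeasurable (hint a).aestronglyMeasurable
        _ = ∏ i ∈ Finset.cons a s ha, ∫ ω, g i ω ∂μ := by
            rw [Finset.prod_cons, ih.2, mul_comm]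

/-- Outer product of `N` vectors, as a tensor indexed by multi-indices. -/
def outerProd {ι : Type*} [Fintype ι] {I : ι → ℕ}
    (u : (n : ι) → Fin (I n) → ℝ) : ((n : ι) → Fin (I n)) → ℝ :=
  fun i => ∏ n, u n (i n)

/-- Kruskal operator: the tensor `[[A⁽¹⁾, …, A⁽ᴺ⁾]] = ∑ᵣ a⁽¹⁾₊ᵣ ∘ ⋯ ∘ a⁽ᴺ⁾₊ᵣ`. -/
def kruskal {ι : Type*} [Fintype ι] {I : ι → ℕ} {R : ℕ}
    (A : (n : ι) → Matrix (Fin (I n)) (Fin R) ℝ) : ((n : ι) → Fin (I n)) → ℝ :=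
  ∑ r : Fin R, outerProd (fun n iₙ => A n iₙ r)

theorem stmt13 {N R : ℕ} {I : Fin N → ℕ}
    {Ω : Type*} [MeasurableSpace Ω] (P : Measure Ω) [IsProbabilityMeasure P]
    (A : (n : Fin N) → Ω → Matrix (Fin (I n)) (Fin R) ℝ)
    (hmeas : ∀ n (i : Fin (I n)), Measurable (fun ω => A n ω i))
    (hindep : iIndepFun
      (fun p : Σ n : Fin N, Fin (I n) => fun ω => A p.1 ω p.2) P)
    (hL2 : ∀ n (i : Fin (I n)) (r : Fin R), MemLp (fun ω => A n ω i r) 2 P)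
    (Y : ((n : Fin N) → Fin (I n)) → ℝ)
    (O : ((n : Fin N) → Fin (I n)) → ℝ)
    (hO : ∀ i, O i = 0 ∨ O i = 1) :
    (∫ ω, ∑ i : (n : Fin N) → Fin (I n),
        (O i * (Y i - kruskal (fun n => A n ω) i)) ^ 2 ∂P)
      = (∑ i : (n : Fin N) → Fin (I n), O i * Y i ^ 2)
        - 2 * (∑ i : (n : Fin N) → Fin (I n),
            O i * Y i * ∑ r : Fin R, ∏ n, ∫ ω, A n ω (i n) r ∂P)
        + ∑ i : (n : Fin N) → Fin (I n),
            O i * ∑ r : Fin R, ∑ s : Fin R,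
              ∏ n, ∫ ω, A n ω (i n) r * A n ω (i n) s ∂P := by
  classical
  have key : ∀ i : (n : Fin N) → Fin (I n),
      MeasureTheory.Integrable
        (fun ω => (O i * (Y i - kruskal (fun n => A n ω) i)) ^ 2) P ∧
      ∫ ω, (O i * (Y i - kruskal (fun n => A n ω) i)) ^ 2 ∂P
        = O i * Y i ^ 2
          - 2 * (O i * Y i * ∑ r : Fin R, ∏ n, ∫ ω, A n ω (i n) r ∂P)
          + O i * ∑ r : Fin R, ∑ s : Fin R,
              ∏ n, ∫ ω, A n ω (i n) r * A n ω (i n) s ∂P := by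
    intro i
    -- independence of the rows (a^(n)_{i_n})_n
    have hrow : iIndepFun
        (fun n ω => A n ω (i n)) P := by
      have hinj : Function.Injective
          (fun n : Fin N => (⟨n, i n⟩ : Σ n : Fin N, Fin (I n))) := by
        intro a b hab
        exact congrArg Sigma.fst hab
      exact iIndepFun_comp_right_of_injective hindep hinj
    -- single entries
    have hent : ∀ r : Fin R, iIndepFun
        (fun n ω => A n ω (i n) r) P := fun r =>
      hrow.comp (fun _ v => v r) (fun _ => measurable_pi_apply r)
    have hentmeas : ∀ (n : Fin N) (r : Fin R),
        Measurable (fun ω => A n ω (i n) r) := fun n r =>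
      (measurable_pi_apply r).comp (hmeas n (i n))
    have hentint : ∀ (n : Fin N) (r : Fin R),
        MeasureTheory.Integrable (fun ω => A n ω (i n) r) P := fun n r =>
      (hL2 n (i n) r).integrable (by norm_num)
    have hP1 : ∀ r : Fin R,
        MeasureTheory.Integrable (fun ω => ∏ n, A n ω (i n) r) P ∧
          ∫ ω, ∏ n, A n ω (i n) r ∂P = ∏ n, ∫ ω, A n ω (i n) r ∂P := fun r =>
      integral_finset_prod_of_iIndepFun Finset.univ _ (hent r)
        (fun n => hentmeas n r) (fun n => hentint n r)
    -- pairs of entries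
    have hpair : ∀ r s : Fin R, iIndepFun
        (fun n ω => A n ω (i n) r * A n ω (i n) s) P := fun r s =>
      hrow.comp (fun _ v => v r * v s)
        (fun _ => (measurable_pi_apply r).mul (measurable_pi_apply s))
    have hpairint : ∀ (n : Fin N) (r s : Fin R),
        MeasureTheory.Integrable (fun ω => A n ω (i n) r * A n ω (i n) s) P := by
      intro n r s
      have := ((hL2 n (i n) s).smul (hL2 n (i n) r)
        (p := 2) (q := 2) (r := 1)).integrable le_rfl
      exact this
    have hP2 : ∀ r s : Fin R,
        MeasureTheory.Integrable (fun ω => ∏ n, A n ω (i n) r * A n ω (i n) s) P ∧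
          ∫ ω, ∏ n, A n ω (i n) r * A n ω (i n) s ∂P
            = ∏ n, ∫ ω, A n ω (i n) r * A n ω (i n) s ∂P := fun r s =>
      integral_finset_prod_of_iIndepFun Finset.univ _ (hpair r s)
        (fun n => (hentmeas n r).mul (hentmeas n s)) (fun n => hpairint n r s)
    -- the Kruskal entry
    set K : Ω → ℝ := fun ω => ∑ r : Fin R, ∏ n, A n ω (i n) r with hK
    have hkrus : ∀ ω, kruskal (fun n => A n ω) i = K ω := by
      intro ω; simp [kruskal, outerProd, Finset.sum_apply, hK]
    have hKint : MeasureTheory.Integrable K P :=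
      MeasureTheory.integrable_finset_sum _ (fun r _ => (hP1 r).1)
    have hKint2 : MeasureTheory.Integrable (fun ω => K ω ^ 2) P := by
      have hsq : (fun ω => K ω ^ 2)
          = fun ω => ∑ r : Fin R, ∑ s : Fin R,
              ∏ n, A n ω (i n) r * A n ω (i n) s := by
        funext ω
        rw [hK, sq, Finset.sum_mul_sum]
        exact Finset.sum_congr rfl fun r _ => Finset.sum_congr rfl fun s _ =>
          (Finset.prod_mul_distrib).symm
      rw [hsq]
      exact MeasureTheory.integrable_finset_sum _
        (fun r _ => MeasureTheory.integrable_finset_sum _ (fun s _ => (hP2 r s).1))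
    have hKval : ∫ ω, K ω ∂P = ∑ r : Fin R, ∏ n, ∫ ω, A n ω (i n) r ∂P := by
      rw [MeasureTheory.integral_finset_sum _ (fun r _ => (hP1 r).1)]
      exact Finset.sum_congr rfl fun r _ => (hP1 r).2
    have hK2val : ∫ ω, K ω ^ 2 ∂P
        = ∑ r : Fin R, ∑ s : Fin R, ∏ n, ∫ ω, A n ω (i n) r * A n ω (i n) s ∂P := by
      have hsq : (fun ω => K ω ^ 2)
          = fun ω => ∑ r : Fin R, ∑ s : Fin R,
              ∏ n, A n ω (i n) r * A n ω (i n) s := by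
        funext ω
        rw [hK, sq, Finset.sum_mul_sum]
        exact Finset.sum_congr rfl fun r _ => Finset.sum_congr rfl fun s _ =>
          (Finset.prod_mul_distrib).symm
      rw [hsq, MeasureTheory.integral_finset_sum _
        (fun r _ => MeasureTheory.integrable_finset_sum _ (fun s _ => (hP2 r s).1))]
      refine Finset.sum_congr rfl fun r _ => ?_
      rw [MeasureTheory.integral_finset_sum _ (fun s _ => (hP2 r s).1)]
      exact Finset.sum_congr rfl fun s _ => (hP2 r s).2
    have hfun : (fun ω => (O i * (Y i - kruskal (fun n => A n ω) i)) ^ 2)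
        = fun ω => O i * Y i ^ 2 - 2 * (O i * Y i) * K ω + O i * K ω ^ 2 := by
      funext ω
      rw [hkrus ω]
      rcases hO i with h | h <;> rw [h] <;> ring
    constructor
    · rw [hfun]
      exact ((MeasureTheory.integrable_const _).sub
        ((hKint.const_mul _))).add (hKint2.const_mul _)
    · have h1 : MeasureTheory.Integrable
          (fun ω => O i * Y i ^ 2 - 2 * (O i * Y i) * K ω) P :=
        (MeasureTheory.integrable_const _).sub (hKint.const_mul _)
      rw [hfun, MeasureTheory.integral_add h1 (hKint2.const_mul _),
        MeasureTheory.integral_sub (MeasureTheory.integrable_const _)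
          (hKint.const_mul _),
        MeasureTheory.integral_const,
        show (∫ a, 2 * (O i * Y i) * K a ∂P) = 2 * (O i * Y i) * ∫ a, K a ∂P from
          MeasureTheory.integral_const_mul _ _,
        show (∫ a, O i * K a ^ 2 ∂P) = O i * ∫ a, K a ^ 2 ∂P from
          MeasureTheory.integral_const_mul _ _,
        hKval, hK2val]
      simp [measure_univ]
      ring
  rw [MeasureTheory.integral_finset_sum _ (fun i _ => (key i).1)]
  rw [Finset.sum_congr rfl (fun i _ => (key i).2)]
  rw [Finset.sum_add_distrib, Finset.sum_sub_distrib, ← Finset.mul_sum]
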